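/- arXiv:2410.17205 — 2 statements merged into one kernel-verified Lean document; each statement's English description precedes it below -/
import Mathlib

section
/- Let ϰ : ℝ → ℝ be given by ϰ(r) = r·log r − r + 1 for r > 0. Let B ≥ 0 and let n be a positive integer with √n ≥ 2B. Then for every real w with |w| ≤ B, one has |n·ϰ(1 − w/√n) − w²/2| ≤ (2/3)·B³/√n. In particular, for a fixed bounded function w, n·ϰ(1 − w/√n) converges to w²/2 uniformly as n → ∞. -/
lemma key_taylor (x : ℝ) (hx : |x| ≤ 1/2) :
    |(1 - x) * Real.log (1 - x) + x - x ^ 2 / 2| ≤ 2 / 3 * |x| ^ 3 := by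
  have hx1 : |x| < 1 := lt_of_le_of_lt hx (by norm_num)
  have hE := Real.abs_log_sub_add_sum_range_le hx1 5
  have hsum : (∑ i ∈ Finset.range 5, x ^ (i + 1) / (i + 1))
      = x + x ^ 2 / 2 + x ^ 3 / 3 + x ^ 4 / 4 + x ^ 5 / 5 := by
    simp [Finset.sum_range_succ]
    ring
  rw [hsum] at hE
  set P : ℝ := x + x ^ 2 / 2 + x ^ 3 / 3 + x ^ 4 / 4 + x ^ 5 / 5 with hP
  set E : ℝ := P + Real.log (1 - x) with hEdef
  have hE2 : |E| ≤ 2 * |x| ^ 6 := by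
    have h1 : (1 : ℝ) - |x| ≥ 1/2 := by linarith
    have h2 : |x| ^ 6 / (1 - |x|) ≤ |x| ^ 6 / (1/2) := by
      apply div_le_div_of_nonneg_left (by positivity) (by norm_num) h1
    calc |E| ≤ |x| ^ 6 / (1 - |x|) := hE
      _ ≤ |x| ^ 6 / (1/2) := h2
      _ = 2 * |x| ^ 6 := by ring
  have hgE : (1 - x) * Real.log (1 - x) + x - x ^ 2 / 2
      = (1 - x) * E + (x ^ 3 / 6 + x ^ 4 / 12 + x ^ 5 / 20 + x ^ 6 / 5) := by
    have : Real.log (1 - x) = E - P := by rw [hEdef]; ring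
    rw [this, hP]; ring
  rw [hgE]
  have habs : |(1 - x) * E + (x ^ 3 / 6 + x ^ 4 / 12 + x ^ 5 / 20 + x ^ 6 / 5)|
      ≤ |1 - x| * |E| + |x ^ 3 / 6 + x ^ 4 / 12 + x ^ 5 / 20 + x ^ 6 / 5| := by
    calc _ ≤ |(1 - x) * E| + |x ^ 3 / 6 + x ^ 4 / 12 + x ^ 5 / 20 + x ^ 6 / 5| := abs_add_le _ _
      _ = _ := by rw [abs_mul]
  refine le_trans habs ?_
  have h1x : |1 - x| ≤ 3/2 := by
    rcases abs_le.mp hx with ⟨h, h'⟩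
    rw [abs_le]; constructor <;> linarith
  have hpoly : |x ^ 3 / 6 + x ^ 4 / 12 + x ^ 5 / 20 + x ^ 6 / 5|
      ≤ |x| ^ 3 / 6 + |x| ^ 4 / 12 + |x| ^ 5 / 20 + |x| ^ 6 / 5 := by
    have h1 := abs_add_le (x ^ 3 / 6 + x ^ 4 / 12 + x ^ 5 / 20) (x ^ 6 / 5)
    have h2 := abs_add_le (x ^ 3 / 6 + x ^ 4 / 12) (x ^ 5 / 20)
    have h3 := abs_add_le (x ^ 3 / 6) (x ^ 4 / 12)
    have e1 : |x ^ 3 / 6| = |x| ^ 3 / 6 := by rw [abs_div, abs_pow]; norm_num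
    have e2 : |x ^ 4 / 12| = |x| ^ 4 / 12 := by rw [abs_div, abs_pow]; norm_num
    have e3 : |x ^ 5 / 20| = |x| ^ 5 / 20 := by rw [abs_div, abs_pow]; norm_num
    have e4 : |x ^ 6 / 5| = |x| ^ 6 / 5 := by rw [abs_div, abs_pow]; norm_num
    rw [e1] at h3; rw [e2] at h3; rw [e3] at h2; rw [e4] at h1
    linarith
  have hEbound : |1 - x| * |E| ≤ 3 * |x| ^ 6 := by
    calc |1 - x| * |E| ≤ (3/2) * (2 * |x| ^ 6) := by
          apply mul_le_mul h1x hE2 (abs_nonneg _) (by norm_num)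
      _ = 3 * |x| ^ 6 := by ring
  have ha : (0:ℝ) ≤ |x| := abs_nonneg x
  nlinarith [pow_le_pow_left₀ ha hx 3, pow_le_pow_left₀ ha hx 4, pow_le_pow_left₀ ha hx 5,
    pow_le_pow_left₀ ha hx 6, pow_nonneg ha 3, pow_nonneg ha 4, pow_nonneg ha 5, pow_nonneg ha 6,
    mul_le_mul_of_nonneg_left (pow_le_pow_left₀ ha hx 3) (pow_nonneg ha 3)]

/-- For `ϰ(r) = r log r - r + 1` (for `r > 0`), `B ≥ 0` and a positive integer `n`
with `√n ≥ 2B`: for every real `w` with `|w| ≤ B`,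
`|n ϰ(1 - w/√n) - w²/2| ≤ (2/3) B³ / √n`. -/
theorem varkappa_scaled_quadratic_approx
    (ϰ : ℝ → ℝ) (hϰ : ∀ r : ℝ, 0 < r → ϰ r = r * Real.log r - r + 1)
    (B : ℝ) (hB : 0 ≤ B) (n : ℕ) (hn : 0 < n) (hsqrt : 2 * B ≤ Real.sqrt n) :
    ∀ w : ℝ, |w| ≤ B →
      |(n : ℝ) * ϰ (1 - w / Real.sqrt n) - w ^ 2 / 2| ≤ 2 / 3 * B ^ 3 / Real.sqrt n := by
  intro w hw
  set s : ℝ := Real.sqrt n with hs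
  have hn1 : (1:ℝ) ≤ (n:ℝ) := by exact_mod_cast hn
  have hs1 : 1 ≤ s := by
    rw [hs, show (1:ℝ) = Real.sqrt 1 from (Real.sqrt_one).symm]
    exact Real.sqrt_le_sqrt hn1
  have hspos : 0 < s := lt_of_lt_of_le one_pos hs1
  have hs2 : s ^ 2 = (n:ℝ) := Real.sq_sqrt (by positivity)
  set x : ℝ := w / s with hx
  have hxb : |x| ≤ 1/2 := by
    rw [hx, abs_div, abs_of_pos hspos, div_le_iff₀ hspos]
    calc |w| ≤ B := hw
      _ = (2 * B) / 2 := by ring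
      _ ≤ s / 2 := by linarith
      _ = 1/2 * s := by ring
  have h1x : 0 < 1 - x := by
    rcases abs_le.mp hxb with ⟨h, h'⟩; linarith
  rw [hϰ _ h1x]
  have hw2 : w ^ 2 = (n:ℝ) * x ^ 2 := by
    rw [hx, div_pow, ← hs2]
    field_simp
  have heq : (n : ℝ) * ((1 - x) * Real.log (1 - x) - (1 - x) + 1) - w ^ 2 / 2
      = (n:ℝ) * ((1 - x) * Real.log (1 - x) + x - x ^ 2 / 2) := by
    rw [hw2]; ring
  rw [heq, abs_mul, abs_of_nonneg (by positivity : (0:ℝ) ≤ (n:ℝ))]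
  have hkey := key_taylor x hxb
  have hxw : |x| = |w| / s := by rw [hx, abs_div, abs_of_pos hspos]
  calc (n:ℝ) * |(1 - x) * Real.log (1 - x) + x - x ^ 2 / 2|
      ≤ (n:ℝ) * (2/3 * |x| ^ 3) := by
        apply mul_le_mul_of_nonneg_left hkey (by positivity)
    _ = 2/3 * |w| ^ 3 / s := by
        rw [hxw, ← hs2]; field_simp
    _ ≤ 2 / 3 * B ^ 3 / s := by
        gcongr
end

section
/- Let M > 0 and let (wⁿ)_{n∈ℕ} be a sequence of measurable functions wⁿ : [0,∞) → ℝ^d such that sup_{T>0} (1/T)·∫₀ᵀ ‖wⁿ(t)‖² dt ≤ M for every n. Then there exist a measurable function w : [0,∞) → ℝ^d with sup_{T>0} (1/T)·∫₀ᵀ ‖w(t)‖² dt ≤ M and a strictly increasing sequence (n_k) of indices such that for every T > 0 and every measurable g : [0,∞) → ℝ^d with ∫₀ᵀ ‖g(t)‖² dt < ∞, one has ∫₀ᵀ ⟨w^{n_k}(t), g(t)⟩ dt → ∫₀ᵀ ⟨w(t), g(t)⟩ dt as k → ∞. -/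
open MeasureTheory Filter
open scoped ENNReal RealInnerProductSpace

/-- Weak sequential compactness of bounded sequences in a separable real Hilbert space. -/
lemma my_exists_weak_subseq {H : Type*} [NormedAddCommGroup H] [InnerProductSpace ℝ H]
    [CompleteSpace H] [SecondCountableTopology H] (V : ℕ → H) (R : ℝ)
    (hR : ∀ n, ‖V n‖ ≤ R) :
    ∃ vlim : H, ∃ φ : ℕ → ℕ, StrictMono φ ∧
      ∀ g : H, Tendsto (fun k => (inner ℝ (V (φ k)) g : ℝ)) atTop (nhds (inner ℝ vlim g)) := by
  have hR0 : 0 ≤ R := le_trans (norm_nonneg _) (hR 0)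
  obtain ⟨e, he⟩ := TopologicalSpace.exists_dense_seq H
  -- bounds on inner products
  have hbound : ∀ n g, |(inner ℝ (V n) g : ℝ)| ≤ R * ‖g‖ := by
    intro n g
    calc |(inner ℝ (V n) g : ℝ)| ≤ ‖V n‖ * ‖g‖ := abs_real_inner_le_norm _ _
    _ ≤ R * ‖g‖ := by gcongr; exact hR n
  -- sequential compactness of the product of intervals
  set K : Set (ℕ → ℝ) := Set.pi Set.univ (fun m => Set.Icc (-(R * ‖e m‖)) (R * ‖e m‖)) with hK
  have hKc : IsCompact K := isCompact_univ_pi fun m => isCompact_Icc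
  have hmem : ∀ n, (fun m => (inner ℝ (V n) (e m) : ℝ)) ∈ K := by
    intro n m _
    have := hbound n (e m)
    rw [abs_le] at this
    exact ⟨this.1, this.2⟩
  obtain ⟨c, -, φ, hφ, hconvK⟩ := hKc.isSeqCompact hmem
  have hcoord : ∀ m, Tendsto (fun k => (inner ℝ (V (φ k)) (e m) : ℝ)) atTop (nhds (c m)) := by
    intro m
    exact (tendsto_pi_nhds.1 hconvK) m
  -- Cauchy for every g
  have key : ∀ g : H, CauchySeq (fun k => (inner ℝ (V (φ k)) g : ℝ)) := by
    intro g
    rw [Metric.cauchySeq_iff]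
    intro ε hε
    have hden : (0:ℝ) < ε / (4 * (R + 1)) := by positivity
    obtain ⟨m, hm⟩ : ∃ m, dist g (e m) < ε / (4 * (R + 1)) := he.exists_dist_lt g hden
    have hc : CauchySeq (fun k => (inner ℝ (V (φ k)) (e m) : ℝ)) := (hcoord m).cauchySeq
    rw [Metric.cauchySeq_iff] at hc
    obtain ⟨N, hN⟩ := hc (ε / 2) (by positivity)
    refine ⟨N, fun j hj k hk => ?_⟩
    have hsplit : ∀ n, (inner ℝ (V n) g : ℝ)
        = inner ℝ (V n) (e m) + inner ℝ (V n) (g - e m) := by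
      intro n; rw [← inner_add_right]; congr 1; abel
    have hsm : ∀ n, |(inner ℝ (V n) (g - e m) : ℝ)| ≤ R * (ε / (4 * (R + 1))) := by
      intro n
      refine le_trans (hbound n _) ?_
      have : ‖g - e m‖ = dist g (e m) := (dist_eq_norm _ _).symm
      rw [this]
      exact mul_le_mul_of_nonneg_left hm.le hR0
    have hre : R * (ε / (4 * (R + 1))) ≤ ε / 4 := by
      have h : R * ε ≤ (R + 1) * ε := by nlinarith
      calc R * (ε / (4 * (R + 1))) = R * ε / (4 * (R + 1)) := by ring
      _ ≤ (R + 1) * ε / (4 * (R + 1)) := by gcongr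
      _ = ε / 4 := by field_simp
    have h1 := hN j hj k hk
    rw [Real.dist_eq] at h1 ⊢
    have h2 := hsm (φ j)
    have h3 := hsm (φ k)
    have h4 := abs_sub (inner ℝ (V (φ j)) (g - e m) : ℝ) (inner ℝ (V (φ k)) (g - e m) : ℝ)
    have h5 : (inner ℝ (V (φ j)) g : ℝ) - (inner ℝ (V (φ k)) g : ℝ)
        = ((inner ℝ (V (φ j)) (e m) : ℝ) - (inner ℝ (V (φ k)) (e m) : ℝ))
          + ((inner ℝ (V (φ j)) (g - e m) : ℝ) - (inner ℝ (V (φ k)) (g - e m) : ℝ)) := by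
      rw [hsplit (φ j), hsplit (φ k)]; ring
    rw [h5]
    have h6 := abs_add_le ((inner ℝ (V (φ j)) (e m) : ℝ) - (inner ℝ (V (φ k)) (e m) : ℝ))
      ((inner ℝ (V (φ j)) (g - e m) : ℝ) - (inner ℝ (V (φ k)) (g - e m) : ℝ))
    linarith
  -- limit functional
  have hex : ∀ g : H, ∃ a : ℝ, Tendsto (fun k => (inner ℝ (V (φ k)) g : ℝ)) atTop (nhds a) :=
    fun g => cauchySeq_tendsto_of_complete (key g)
  choose f0 hf0 using hex
  have hadd : ∀ g h : H, f0 (g + h) = f0 g + f0 h := by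
    intro g h
    refine tendsto_nhds_unique (hf0 (g + h)) ?_
    have : (fun k => (inner ℝ (V (φ k)) (g + h) : ℝ))
        = fun k => (inner ℝ (V (φ k)) g : ℝ) + (inner ℝ (V (φ k)) h : ℝ) := by
      funext k; rw [inner_add_right]
    rw [this]
    exact (hf0 g).add (hf0 h)
  have hsmul : ∀ (r : ℝ) (g : H), f0 (r • g) = r * f0 g := by
    intro r g
    refine tendsto_nhds_unique (hf0 (r • g)) ?_
    have : (fun k => (inner ℝ (V (φ k)) (r • g) : ℝ))
        = fun k => r * (inner ℝ (V (φ k)) g : ℝ) := by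
      funext k; rw [real_inner_smul_right]
    rw [this]
    exact (hf0 g).const_mul r
  have hbd0 : ∀ g : H, |f0 g| ≤ R * ‖g‖ := by
    intro g
    have : Tendsto (fun k => |(inner ℝ (V (φ k)) g : ℝ)|) atTop (nhds |f0 g|) :=
      (hf0 g).abs
    exact le_of_tendsto this (Eventually.of_forall fun k => hbound _ g)
  let F : H →L[ℝ] ℝ :=
    LinearMap.mkContinuous
      { toFun := f0, map_add' := hadd, map_smul' := hsmul } R
      (fun g => by rw [Real.norm_eq_abs]; exact hbd0 g)
  refine ⟨(InnerProductSpace.toDual ℝ H).symm F, φ, hφ, fun g => ?_⟩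
  have hvg : (inner ℝ ((InnerProductSpace.toDual ℝ H).symm F) g : ℝ) = F g :=
    InnerProductSpace.toDual_symm_apply
  rw [hvg]
  exact hf0 g

open MeasureTheory Filter
open scoped ENNReal

variable {α : Type*} [MeasurableSpace α] {ν : Measure α}

lemma my_sq_aesm {E : Type*} [NormedAddCommGroup E] {f : α → E}
    (hm : AEStronglyMeasurable f ν) :
    AEStronglyMeasurable (fun t => ‖f t‖ ^ 2) ν :=
  (hm.norm.aemeasurable.pow_const 2).aestronglyMeasurable

lemma my_memℒp_iff {E : Type*} [NormedAddCommGroup E] {f : α → E}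
    (hm : AEStronglyMeasurable f ν) :
    MemLp f 2 ν ↔ (∫⁻ t, ENNReal.ofReal (‖f t‖ ^ 2) ∂ν) < ⊤ := by
  rw [memLp_two_iff_integrable_sq_norm hm]
  constructor
  · intro h
    exact (hasFiniteIntegral_iff_ofReal (Eventually.of_forall fun t => sq_nonneg _)).1 h.2
  · intro h
    exact ⟨my_sq_aesm hm,
      (hasFiniteIntegral_iff_ofReal (Eventually.of_forall fun t => sq_nonneg _)).2 h⟩

lemma my_integral_sq_eq {E : Type*} [NormedAddCommGroup E] {f : α → E}
    (hm : AEStronglyMeasurable f ν) :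
    ∫ t, ‖f t‖ ^ 2 ∂ν = (∫⁻ t, ENNReal.ofReal (‖f t‖ ^ 2) ∂ν).toReal :=
  integral_eq_lintegral_of_nonneg_ae (Eventually.of_forall fun t => sq_nonneg _) (my_sq_aesm hm)

lemma my_inner_toLp {E : Type*} [NormedAddCommGroup E] [InnerProductSpace ℝ E]
    {f g : α → E} (hf : MemLp f 2 ν) (hg : MemLp g 2 ν) :
    (inner ℝ (hf.toLp f) (hg.toLp g) : ℝ) = ∫ t, (inner ℝ (f t) (g t) : ℝ) ∂ν := by
  rw [MeasureTheory.L2.inner_def]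
  refine integral_congr_ae ?_
  filter_upwards [hf.coeFn_toLp, hg.coeFn_toLp] with t h1 h2
  rw [h1, h2]

lemma my_norm_toLp_sq {E : Type*} [NormedAddCommGroup E] [InnerProductSpace ℝ E]
    {f : α → E} (hf : MemLp f 2 ν) :
    ‖hf.toLp f‖ ^ 2 = ∫ t, ‖f t‖ ^ 2 ∂ν := by
  rw [← real_inner_self_eq_norm_sq, my_inner_toLp hf hf]
  refine integral_congr_ae (Eventually.of_forall fun t => ?_)
  simp only []
  rw [real_inner_self_eq_norm_sq]

lemma my_norm_toLp_le {E : Type*} [NormedAddCommGroup E] [InnerProductSpace ℝ E]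
    {f : α → E} (hf : MemLp f 2 ν) {c : ℝ} (hc : 0 ≤ c)
    (h : (∫⁻ t, ENNReal.ofReal (‖f t‖ ^ 2) ∂ν) ≤ ENNReal.ofReal (c ^ 2)) :
    ‖hf.toLp f‖ ≤ c := by
  have h1 : ‖hf.toLp f‖ ^ 2 ≤ c ^ 2 := by
    rw [my_norm_toLp_sq hf, my_integral_sq_eq hf.1]
    calc (∫⁻ t, ENNReal.ofReal (‖f t‖ ^ 2) ∂ν).toReal
        ≤ (ENNReal.ofReal (c ^ 2)).toReal := ENNReal.toReal_mono ENNReal.ofReal_ne_top h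
      _ = c ^ 2 := ENNReal.toReal_ofReal (sq_nonneg _)
  calc ‖hf.toLp f‖ = Real.sqrt (‖hf.toLp f‖ ^ 2) := (Real.sqrt_sq (norm_nonneg _)).symm
    _ ≤ Real.sqrt (c ^ 2) := Real.sqrt_le_sqrt h1
    _ = c := Real.sqrt_sq hc

set_option maxHeartbeats 1000000 in
set_option synthInstance.maxHeartbeats 400000 in
/-- Sequential compactness of the set of `ℝ^d`-valued functions whose time-averaged `L²`
norm is bounded by `M`, in the topology of weak `L²([0,T])` convergence for every `T > 0`. -/
theorem timeAveraged_L2_ball_weak_sequential_compactness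
    (d : ℕ) (M : ℝ) (hM : 0 < M)
    (w : ℕ → ℝ → EuclideanSpace ℝ (Fin d))
    (hmeas : ∀ n, Measurable (w n))
    (hbd : ∀ n : ℕ, ∀ T : ℝ, 0 < T →
      (∫⁻ t in Set.Ioc 0 T, ENNReal.ofReal (‖w n t‖ ^ 2)) / ENNReal.ofReal T
        ≤ ENNReal.ofReal M) :
    ∃ wlim : ℝ → EuclideanSpace ℝ (Fin d), Measurable wlim ∧
      (∀ T : ℝ, 0 < T →
        (∫⁻ t in Set.Ioc 0 T, ENNReal.ofReal (‖wlim t‖ ^ 2)) / ENNReal.ofReal T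
          ≤ ENNReal.ofReal M) ∧
      ∃ φ : ℕ → ℕ, StrictMono φ ∧
        ∀ T : ℝ, 0 < T → ∀ g : ℝ → EuclideanSpace ℝ (Fin d), Measurable g →
          (∫⁻ t in Set.Ioc 0 T, ENNReal.ofReal (‖g t‖ ^ 2)) < ⊤ →
          Tendsto (fun k : ℕ => ∫ t in Set.Ioc 0 T, (inner ℝ (w (φ k) t) (g t) : ℝ))
            atTop (nhds (∫ t in Set.Ioc 0 T, (inner ℝ (wlim t) (g t) : ℝ))) := by
  classical
  have fact2 : Fact ((2 : ℝ≥0∞) ≠ ∞) := ⟨by norm_num⟩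
  set μ : Measure ℝ := volume.restrict (Set.Ioi 0) with hμdef
  have hIocIoi : ∀ T : ℝ, Set.Ioc (0:ℝ) T ⊆ Set.Ioi 0 := fun T x hx => hx.1
  have hrr : ∀ T : ℝ, μ.restrict (Set.Ioc 0 T) = volume.restrict (Set.Ioc 0 T) := by
    intro T
    rw [hμdef, Measure.restrict_restrict measurableSet_Ioc,
      Set.inter_eq_left.2 (hIocIoi T)]
  -- Step A : the basic integral bound
  have hA : ∀ n (T : ℝ), 0 < T →
      (∫⁻ t in Set.Ioc 0 T, ENNReal.ofReal (‖w n t‖ ^ 2)) ≤ ENNReal.ofReal (M * T) := by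
    intro n T hT
    have h := hbd n T hT
    rw [ENNReal.div_le_iff (ENNReal.ofReal_pos.2 hT).ne' ENNReal.ofReal_ne_top] at h
    calc (∫⁻ t in Set.Ioc 0 T, ENNReal.ofReal (‖w n t‖ ^ 2))
        ≤ ENNReal.ofReal M * ENNReal.ofReal T := h
      _ = ENNReal.ofReal (M * T) := (ENNReal.ofReal_mul hM.le).symm
  -- the exponentially damped functions
  have hexpm : Measurable fun t : ℝ => Real.exp (-(t / 2)) :=
    Real.measurable_exp.comp ((measurable_id.div_const 2).neg)
  have hexpp : Measurable fun t : ℝ => Real.exp (t / 2) :=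
    Real.measurable_exp.comp (measurable_id.div_const 2)
  set v : ℕ → ℝ → (EuclideanSpace ℝ (Fin d)) := fun n t => Real.exp (-(t / 2)) • w n t with hvdef
  have hvmeas : ∀ n, Measurable (v n) := fun n => hexpm.smul (hmeas n)
  have hvnorm : ∀ n t, ‖v n t‖ ^ 2 = Real.exp (-t) * ‖w n t‖ ^ 2 := by
    intro n t
    rw [hvdef]
    simp only []
    rw [norm_smul, Real.norm_eq_abs, abs_of_pos (Real.exp_pos _), mul_pow]
    congr 1
    rw [← Real.exp_nat_mul]
    congr 1
    push_cast
    ring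
  -- summable bound
  set C : ℝ≥0∞ := ∑' k : ℕ, ENNReal.ofReal (Real.exp (-(k : ℝ)) * (M * ((k : ℝ) + 1))) with hCdef
  have hsum : Summable (fun k : ℕ => Real.exp (-(k : ℝ)) * (M * ((k : ℝ) + 1))) := by
    have hr : ‖Real.exp (-1)‖ < 1 := by
      rw [Real.norm_eq_abs, abs_of_pos (Real.exp_pos _)]
      exact Real.exp_lt_one_iff.2 (by norm_num)
    have h1 : Summable (fun k : ℕ => (k : ℝ) ^ 1 * Real.exp (-1) ^ k) :=
      summable_pow_mul_geometric_of_norm_lt_one 1 hr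
    have h2 : Summable (fun k : ℕ => Real.exp (-1) ^ k) :=
      summable_geometric_of_norm_lt_one hr
    have h3 : Summable (fun k : ℕ => ((k : ℝ) + 1) * Real.exp (-1) ^ k) := by
      have := (h1.add h2)
      refine this.congr fun k => ?_
      push_cast
      ring
    refine (h3.mul_left M).congr fun k => ?_
    have : Real.exp (-(k : ℝ)) = Real.exp (-1) ^ k := by
      rw [← Real.exp_nat_mul]
      congr 1
      ring
    rw [this]
    ring
  have hCfin : C < ⊤ := by
    rw [hCdef, ← ENNReal.ofReal_tsum_of_nonneg
      (fun k => by positivity) hsum]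
    exact ENNReal.ofReal_lt_top
  -- the union decomposition bound
  have hB : ∀ n, (∫⁻ t, ENNReal.ofReal (‖v n t‖ ^ 2) ∂μ) ≤ C := by
    intro n
    have hcongr : (fun t => ENNReal.ofReal (‖v n t‖ ^ 2))
        = fun t => ENNReal.ofReal (Real.exp (-t) * ‖w n t‖ ^ 2) := by
      funext t; rw [hvnorm]
    rw [hμdef, hcongr]
    have hsub : Set.Ioi (0:ℝ) ⊆ ⋃ k : ℕ, Set.Ioc (k : ℝ) ((k : ℝ) + 1) := by
      intro x hx
      have hx0 : (0:ℝ) < x := hx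
      have h1 : 1 ≤ ⌈x⌉₊ := Nat.one_le_ceil_iff.2 hx0
      refine Set.mem_iUnion.2 ⟨⌈x⌉₊ - 1, ?_, ?_⟩
      · have h2 : ((⌈x⌉₊ : ℝ) - 1) < x := by
          have := Nat.ceil_lt_add_one hx0.le
          linarith
        have h3 : ((⌈x⌉₊ - 1 : ℕ) : ℝ) = (⌈x⌉₊ : ℝ) - 1 := by
          push_cast [Nat.cast_sub h1]
          ring
        rw [h3]; exact h2
      · have h4 : x ≤ (⌈x⌉₊ : ℝ) := Nat.le_ceil x
        have h3 : ((⌈x⌉₊ - 1 : ℕ) : ℝ) + 1 = (⌈x⌉₊ : ℝ) := by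
          push_cast [Nat.cast_sub h1]
          ring
        rw [h3]; exact h4
    calc (∫⁻ t in Set.Ioi 0, ENNReal.ofReal (Real.exp (-t) * ‖w n t‖ ^ 2))
        ≤ ∫⁻ t in ⋃ k : ℕ, Set.Ioc (k : ℝ) ((k : ℝ) + 1),
            ENNReal.ofReal (Real.exp (-t) * ‖w n t‖ ^ 2) := lintegral_mono_set hsub
      _ ≤ ∑' k : ℕ, ∫⁻ t in Set.Ioc (k : ℝ) ((k : ℝ) + 1),
            ENNReal.ofReal (Real.exp (-t) * ‖w n t‖ ^ 2) := lintegral_iUnion_le _ _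
      _ ≤ ∑' k : ℕ, ENNReal.ofReal (Real.exp (-(k : ℝ)) * (M * ((k : ℝ) + 1))) := ?_
      _ = C := hCdef.symm
    refine ENNReal.tsum_le_tsum fun k => ?_
    calc (∫⁻ t in Set.Ioc (k : ℝ) ((k : ℝ) + 1), ENNReal.ofReal (Real.exp (-t) * ‖w n t‖ ^ 2))
        ≤ ∫⁻ t in Set.Ioc (k : ℝ) ((k : ℝ) + 1),
            ENNReal.ofReal (Real.exp (-(k : ℝ))) * ENNReal.ofReal (‖w n t‖ ^ 2) := by
          refine setLIntegral_mono' measurableSet_Ioc fun t ht => ?_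
          rw [← ENNReal.ofReal_mul (Real.exp_pos _).le]
          refine ENNReal.ofReal_le_ofReal ?_
          have : Real.exp (-t) ≤ Real.exp (-(k : ℝ)) :=
            Real.exp_le_exp.2 (by linarith [ht.1])
          exact mul_le_mul_of_nonneg_right this (sq_nonneg _)
      _ = ENNReal.ofReal (Real.exp (-(k : ℝ)))
            * ∫⁻ t in Set.Ioc (k : ℝ) ((k : ℝ) + 1), ENNReal.ofReal (‖w n t‖ ^ 2) :=
          lintegral_const_mul' _ _ ENNReal.ofReal_ne_top
      _ ≤ ENNReal.ofReal (Real.exp (-(k : ℝ)))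
            * ∫⁻ t in Set.Ioc (0 : ℝ) ((k : ℝ) + 1), ENNReal.ofReal (‖w n t‖ ^ 2) := by
          gcongr
          exact Nat.cast_nonneg k
      _ ≤ ENNReal.ofReal (Real.exp (-(k : ℝ))) * ENNReal.ofReal (M * ((k : ℝ) + 1)) := by
          gcongr
          exact hA n ((k : ℝ) + 1) (by positivity)
      _ = ENNReal.ofReal (Real.exp (-(k : ℝ)) * (M * ((k : ℝ) + 1))) :=
          (ENNReal.ofReal_mul (Real.exp_pos _).le).symm
  have hv : ∀ n, MemLp (v n) 2 μ := fun n =>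
    (my_memℒp_iff (hvmeas n).aestronglyMeasurable).2 (lt_of_le_of_lt (hB n) hCfin)
  set V : ℕ → Lp (EuclideanSpace ℝ (Fin d)) 2 μ := fun n => (hv n).toLp (v n) with hVdef
  set R : ℝ := Real.sqrt C.toReal with hRdef
  have hVR : ∀ n, ‖V n‖ ≤ R := by
    intro n
    refine my_norm_toLp_le (hv n) (Real.sqrt_nonneg _) ?_
    rw [hRdef, Real.sq_sqrt ENNReal.toReal_nonneg, ENNReal.ofReal_toReal hCfin.ne]
    exact hB n
  obtain ⟨vlim, φ, hφ, hweak⟩ := my_exists_weak_subseq V R hVR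
  -- measurable representative of the weak limit
  set vfun : ℝ → (EuclideanSpace ℝ (Fin d)) := (Lp.aestronglyMeasurable vlim).mk _ with hvfdef
  have hvfun_sm : StronglyMeasurable vfun := (Lp.aestronglyMeasurable vlim).stronglyMeasurable_mk
  have hvfun_ae : (vlim : ℝ → EuclideanSpace ℝ (Fin d)) =ᵐ[μ] vfun := (Lp.aestronglyMeasurable vlim).ae_eq_mk
  have hvfun_mem : MemLp vfun 2 μ := (Lp.memLp vlim).ae_eq hvfun_ae
  have htoLp : hvfun_mem.toLp vfun = vlim := by
    rw [MemLp.toLp_congr hvfun_mem (Lp.memLp vlim) hvfun_ae.symm, Lp.toLp_coeFn]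
  set wlim : ℝ → (EuclideanSpace ℝ (Fin d)) := fun t => Real.exp (t / 2) • vfun t with hwdef
  have hwlim_meas : Measurable wlim := hexpp.smul hvfun_sm.measurable
  -- main weak convergence statement
  have hmain : ∀ T : ℝ, 0 < T → ∀ g : ℝ → EuclideanSpace ℝ (Fin d), Measurable g →
      (∫⁻ t in Set.Ioc 0 T, ENNReal.ofReal (‖g t‖ ^ 2)) < ⊤ →
      Tendsto (fun k : ℕ => ∫ t in Set.Ioc 0 T, (inner ℝ (w (φ k) t) (g t) : ℝ))
        atTop (nhds (∫ t in Set.Ioc 0 T, (inner ℝ (wlim t) (g t) : ℝ))) := by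
    intro T hT g hgm hgfin
    set Gfun : ℝ → (EuclideanSpace ℝ (Fin d)) := Set.indicator (Set.Ioc 0 T) (fun t => Real.exp (t / 2) • g t)
      with hGdef
    have hGm : Measurable Gfun := (hexpp.smul hgm).indicator measurableSet_Ioc
    have hGfin : (∫⁻ t, ENNReal.ofReal (‖Gfun t‖ ^ 2) ∂μ) < ⊤ := by
      have heq : (fun t => ENNReal.ofReal (‖Gfun t‖ ^ 2))
          = Set.indicator (Set.Ioc 0 T)
            (fun t => ENNReal.ofReal (‖Real.exp (t / 2) • g t‖ ^ 2)) := by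
        funext t
        by_cases ht : t ∈ Set.Ioc 0 T
        · rw [hGdef]
          simp only [Set.indicator_of_mem ht]
        · rw [hGdef]
          simp only [Set.indicator_of_notMem ht, norm_zero]
          norm_num
      rw [heq, lintegral_indicator measurableSet_Ioc, hrr T]
      calc (∫⁻ t in Set.Ioc 0 T, ENNReal.ofReal (‖Real.exp (t / 2) • g t‖ ^ 2))
          ≤ ∫⁻ t in Set.Ioc 0 T,
              ENNReal.ofReal (Real.exp T) * ENNReal.ofReal (‖g t‖ ^ 2) := by
            refine setLIntegral_mono' measurableSet_Ioc fun t ht => ?_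
            rw [norm_smul, Real.norm_eq_abs, abs_of_pos (Real.exp_pos _), mul_pow,
              ← ENNReal.ofReal_mul (by positivity)]
            refine ENNReal.ofReal_le_ofReal (mul_le_mul_of_nonneg_right ?_ (sq_nonneg _))
            calc Real.exp (t / 2) ^ 2 = Real.exp t := by
                  rw [← Real.exp_nat_mul]; congr 1; push_cast; ring
              _ ≤ Real.exp T := Real.exp_le_exp.2 ht.2
        _ = ENNReal.ofReal (Real.exp T) * ∫⁻ t in Set.Ioc 0 T, ENNReal.ofReal (‖g t‖ ^ 2) :=
            lintegral_const_mul' _ _ ENNReal.ofReal_ne_top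
        _ < ⊤ := ENNReal.mul_lt_top ENNReal.ofReal_lt_top hgfin
    have hGmem : MemLp Gfun 2 μ := (my_memℒp_iff hGm.aestronglyMeasurable).2 hGfin
    -- key identity
    have hident : ∀ (u : ℝ → EuclideanSpace ℝ (Fin d)) (hu : MemLp u 2 μ),
        (inner ℝ (hu.toLp u) (hGmem.toLp Gfun) : ℝ)
          = ∫ t in Set.Ioc 0 T, (inner ℝ (Real.exp (t / 2) • u t) (g t) : ℝ) := by
      intro u hu
      rw [my_inner_toLp hu hGmem]
      have heq : ∀ t, (inner ℝ (u t) (Gfun t) : ℝ)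
          = Set.indicator (Set.Ioc 0 T)
              (fun t => (inner ℝ (Real.exp (t / 2) • u t) (g t) : ℝ)) t := by
        intro t
        by_cases ht : t ∈ Set.Ioc 0 T
        · rw [Set.indicator_of_mem ht, hGdef]
          simp only [Set.indicator_of_mem ht]
          rw [real_inner_smul_right, real_inner_smul_left]
        · rw [Set.indicator_of_notMem ht, hGdef]
          simp only [Set.indicator_of_notMem ht, inner_zero_right]
      calc ∫ t, (inner ℝ (u t) (Gfun t) : ℝ) ∂μ
          = ∫ t, Set.indicator (Set.Ioc 0 T)
              (fun t => (inner ℝ (Real.exp (t / 2) • u t) (g t) : ℝ)) t ∂μ :=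
            integral_congr_ae (Eventually.of_forall heq)
        _ = ∫ t in Set.Ioc 0 T, (inner ℝ (Real.exp (t / 2) • u t) (g t) : ℝ) ∂μ :=
            integral_indicator measurableSet_Ioc
        _ = ∫ t in Set.Ioc 0 T, (inner ℝ (Real.exp (t / 2) • u t) (g t) : ℝ) := by rw [hrr T]
    have h1 : ∀ k, (inner ℝ (V (φ k)) (hGmem.toLp Gfun) : ℝ)
        = ∫ t in Set.Ioc 0 T, (inner ℝ (w (φ k) t) (g t) : ℝ) := by
      intro k
      rw [hVdef]
      simp only []
      rw [hident (v (φ k)) (hv (φ k))]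
      refine integral_congr_ae (Eventually.of_forall fun t => ?_)
      simp only []
      congr 1
      rw [hvdef]
      simp only []
      rw [smul_smul, ← Real.exp_add]
      norm_num
    have h2 : (inner ℝ vlim (hGmem.toLp Gfun) : ℝ)
        = ∫ t in Set.Ioc 0 T, (inner ℝ (wlim t) (g t) : ℝ) := by
      rw [← htoLp, hident vfun hvfun_mem]
    have hfe : (fun k : ℕ => ∫ t in Set.Ioc 0 T, (inner ℝ (w (φ k) t) (g t) : ℝ))
        = fun k => (inner ℝ (V (φ k)) (hGmem.toLp Gfun) : ℝ) :=
      funext fun k => (h1 k).symm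
    rw [hfe, ← h2]
    exact hweak (hGmem.toLp Gfun)
  -- the averaged bound for the limit
  have hboundlim : ∀ T : ℝ, 0 < T →
      (∫⁻ t in Set.Ioc 0 T, ENNReal.ofReal (‖wlim t‖ ^ 2)) / ENNReal.ofReal T
        ≤ ENNReal.ofReal M := by
    intro T hT
    have hWfin : (∫⁻ t in Set.Ioc 0 T, ENNReal.ofReal (‖wlim t‖ ^ 2)) < ⊤ := by
      calc (∫⁻ t in Set.Ioc 0 T, ENNReal.ofReal (‖wlim t‖ ^ 2))
          ≤ ∫⁻ t in Set.Ioc 0 T,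
              ENNReal.ofReal (Real.exp T) * ENNReal.ofReal (‖vfun t‖ ^ 2) := by
            refine setLIntegral_mono' measurableSet_Ioc fun t ht => ?_
            rw [hwdef]
            simp only []
            rw [norm_smul, Real.norm_eq_abs, abs_of_pos (Real.exp_pos _), mul_pow,
              ← ENNReal.ofReal_mul (by positivity)]
            refine ENNReal.ofReal_le_ofReal (mul_le_mul_of_nonneg_right ?_ (sq_nonneg _))
            calc Real.exp (t / 2) ^ 2 = Real.exp t := by
                  rw [← Real.exp_nat_mul]; congr 1; push_cast; ring
              _ ≤ Real.exp T := Real.exp_le_exp.2 ht.2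
        _ = ENNReal.ofReal (Real.exp T) * ∫⁻ t in Set.Ioc 0 T, ENNReal.ofReal (‖vfun t‖ ^ 2) :=
            lintegral_const_mul' _ _ ENNReal.ofReal_ne_top
        _ ≤ ENNReal.ofReal (Real.exp T) * ∫⁻ t, ENNReal.ofReal (‖vfun t‖ ^ 2) ∂μ := by
            gcongr
            rw [← hrr T]
            exact Measure.restrict_le_self
        _ < ⊤ := ENNReal.mul_lt_top ENNReal.ofReal_lt_top
            ((my_memℒp_iff hvfun_sm.aestronglyMeasurable).1 hvfun_mem)
    set ν : Measure ℝ := volume.restrict (Set.Ioc 0 T) with hνdef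
    have hwmemν : ∀ n, MemLp (w n) 2 ν := fun n =>
      (my_memℒp_iff (hmeas n).aestronglyMeasurable).2
        (lt_of_le_of_lt (hA n T hT) ENNReal.ofReal_lt_top)
    have hWmem : MemLp wlim 2 ν :=
      (my_memℒp_iff hwlim_meas.aestronglyMeasurable).2 hWfin
    set B := hWmem.toLp wlim with hBdef
    have hAk : ∀ k, ‖(hwmemν (φ k)).toLp (w (φ k))‖ ≤ Real.sqrt (M * T) := by
      intro k
      refine my_norm_toLp_le _ (Real.sqrt_nonneg _) ?_
      rw [Real.sq_sqrt (by positivity)]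
      exact hA _ T hT
    have htd := hmain T hT wlim hwlim_meas hWfin
    have hlim_eq : (∫ t in Set.Ioc 0 T, (inner ℝ (wlim t) (wlim t) : ℝ)) = ‖B‖ ^ 2 := by
      rw [hBdef, my_norm_toLp_sq hWmem]
      refine integral_congr_ae (Eventually.of_forall fun t => ?_)
      simp only []
      rw [real_inner_self_eq_norm_sq]
    have hterm : ∀ k, (∫ t in Set.Ioc 0 T, (inner ℝ (w (φ k) t) (wlim t) : ℝ))
        ≤ Real.sqrt (M * T) * ‖B‖ := by
      intro k
      rw [← my_inner_toLp (hwmemν (φ k)) hWmem]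
      calc (inner ℝ ((hwmemν (φ k)).toLp (w (φ k))) B : ℝ)
          ≤ |(inner ℝ ((hwmemν (φ k)).toLp (w (φ k))) B : ℝ)| := le_abs_self _
        _ ≤ ‖(hwmemν (φ k)).toLp (w (φ k))‖ * ‖B‖ := abs_real_inner_le_norm _ _
        _ ≤ Real.sqrt (M * T) * ‖B‖ :=
            mul_le_mul_of_nonneg_right (hAk k) (norm_nonneg _)
    have hB2 : ‖B‖ ^ 2 ≤ Real.sqrt (M * T) * ‖B‖ := by
      rw [← hlim_eq]
      exact le_of_tendsto htd (Eventually.of_forall hterm)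
    have hBle : ‖B‖ ≤ Real.sqrt (M * T) := by
      rcases eq_or_lt_of_le (norm_nonneg B) with hb | hb
      · rw [← hb]; exact Real.sqrt_nonneg _
      · have := hB2
        rw [pow_two] at this
        exact le_of_mul_le_mul_right (by linarith [this]) hb
    have hI : ‖B‖ ^ 2 ≤ M * T := by
      calc ‖B‖ ^ 2 ≤ Real.sqrt (M * T) ^ 2 := pow_le_pow_left₀ (norm_nonneg _) hBle 2
        _ = M * T := Real.sq_sqrt (by positivity)
    have h1 : ‖B‖ ^ 2 = (∫⁻ t in Set.Ioc 0 T, ENNReal.ofReal (‖wlim t‖ ^ 2)).toReal := by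
      rw [hBdef, my_norm_toLp_sq hWmem, my_integral_sq_eq hwlim_meas.aestronglyMeasurable]
    have h2 : (∫⁻ t in Set.Ioc 0 T, ENNReal.ofReal (‖wlim t‖ ^ 2))
        ≤ ENNReal.ofReal (M * T) := by
      rw [ENNReal.le_ofReal_iff_toReal_le hWfin.ne (by positivity), ← h1]
      exact hI
    rw [ENNReal.div_le_iff (ENNReal.ofReal_pos.2 hT).ne' ENNReal.ofReal_ne_top]
    calc (∫⁻ t in Set.Ioc 0 T, ENNReal.ofReal (‖wlim t‖ ^ 2))
        ≤ ENNReal.ofReal (M * T) := h2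
      _ = ENNReal.ofReal M * ENNReal.ofReal T := ENNReal.ofReal_mul hM.le
  exact ⟨wlim, hwlim_meas, hboundlim, φ, hφ, hmain⟩
end
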